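/- With M and a as above, the partial derivative M_y satisfies M_y = −(p − at)/√(1+a²). -/

import Mathlib

open Real MeasureTheory Set Filter

noncomputable def phi (s : ℝ) : ℝ := Real.exp (-s ^ 2 / 2) / Real.sqrt (2 * Real.pi)

noncomputable def Phi (t : ℝ) : ℝ := ∫ s in Set.Iic t, phi s

lemma phi_pos (s : ℝ) : 0 < phi s :=
  div_pos (Real.exp_pos _) (Real.sqrt_pos.2 (by positivity))

lemma phi_le_one (s : ℝ) : phi s ≤ 1 := by
  rw [phi, div_le_one (Real.sqrt_pos.2 (by positivity))]
  calc Real.exp (-s ^ 2 / 2) ≤ 1 := Real.exp_le_one_iff.2 (by nlinarith [sq_nonneg s])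
    _ ≤ Real.sqrt (2 * Real.pi) := by
        rw [show (1:ℝ) = Real.sqrt 1 from (Real.sqrt_one).symm]
        exact Real.sqrt_le_sqrt (by nlinarith [Real.pi_gt_three])

lemma continuous_phi : Continuous phi := by
  unfold phi; fun_prop

lemma integrable_phi : Integrable phi := by
  have : Integrable (fun s : ℝ => Real.exp (-(1/2) * s ^ 2)) := integrable_exp_neg_mul_sq (by norm_num)
  have h := this.div_const (Real.sqrt (2 * Real.pi))
  refine h.congr (Eventually.of_forall fun s => ?_)
  simp [phi]; ring_nf

lemma integrable_mul_phi : Integrable (fun s => s * phi s) := by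
  have : Integrable (fun s : ℝ => s * Real.exp (-(1/2) * s ^ 2)) := integrable_mul_exp_neg_mul_sq (by norm_num)
  have h := this.div_const (Real.sqrt (2 * Real.pi))
  refine h.congr (Eventually.of_forall fun s => ?_)
  simp [phi]; ring_nf

lemma hasDerivAt_phi (s : ℝ) : HasDerivAt phi (-s * phi s) s := by
  have h1 : HasDerivAt (fun s : ℝ => -s ^ 2 / 2) (-s) s := by
    have := ((hasDerivAt_pow 2 s).neg).div_const 2
    simpa using this.congr_deriv (by ring)
  have := (h1.exp).div_const (Real.sqrt (2 * Real.pi))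
  refine this.congr_deriv ?_
  simp [phi]; ring

lemma tendsto_phi_atBot : Tendsto phi atBot (nhds 0) := by
  have h1 : Tendsto (fun s : ℝ => -s ^ 2 / 2) atBot atBot := by
    apply Tendsto.atBot_div_const (by norm_num)
    have h2 : Tendsto (fun s : ℝ => s ^ 2) atBot atTop := by
      have := (tendsto_pow_atTop (n := 2) (by norm_num)).comp (tendsto_neg_atBot_atTop : Tendsto (fun x : ℝ => -x) atBot atTop)
      refine this.congr fun x => by simp
    have := tendsto_neg_atTop_atBot.comp h2
    exact this.congr fun x => rfl
  have h3 : Tendsto (fun s : ℝ => Real.exp (-s^2/2)) atBot (nhds 0) :=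
    Real.tendsto_exp_atBot.comp h1
  have := h3.div_const (Real.sqrt (2 * Real.pi))
  unfold phi
  convert this using 2
  simp

lemma integral_phi : ∫ s, phi s = 1 := by
  have h : ∫ s : ℝ, Real.exp (-(1/2) * s ^ 2) = Real.sqrt (Real.pi / (1/2)) :=
    integral_gaussian (1/2)
  have : ∫ s, phi s = (∫ s : ℝ, Real.exp (-(1/2) * s ^ 2)) / Real.sqrt (2 * Real.pi) := by
    rw [← integral_div]
    congr 1; funext s; rw [phi]; ring_nf
  rw [this, h]
  rw [div_eq_one_iff_eq (by positivity)]
  congr 1; ring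

lemma Phi_nonneg (x : ℝ) : 0 ≤ Phi x :=
  setIntegral_nonneg measurableSet_Iic fun s _ => (phi_pos s).le

lemma Phi_le_one (x : ℝ) : Phi x ≤ 1 := by
  rw [← integral_phi]
  exact setIntegral_le_integral integrable_phi (Eventually.of_forall fun s => (phi_pos s).le)

lemma hasDerivAt_Phi (x : ℝ) : HasDerivAt Phi (phi x) x := by
  have key : ∀ z : ℝ, Phi z = Phi x + ∫ s in x..z, phi s := by
    intro z
    have := intervalIntegral.integral_Iic_sub_Iic (f := phi) (μ := volume)
      integrable_phi.integrableOn integrable_phi.integrableOn (a := x) (b := z)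
    rw [Phi, Phi, ← this]; ring
  have h2 : HasDerivAt (fun z => Phi x + ∫ s in x..z, phi s) (phi x) x := by
    refine (HasDerivAt.const_add _ ?_)
    exact intervalIntegral.integral_hasDerivAt_right
      (integrable_phi.intervalIntegrable)
      (integrable_phi.1.stronglyMeasurableAtFilter)
      continuous_phi.continuousAt
  exact h2.congr_of_eventuallyEq (Eventually.of_forall key)

lemma continuous_Phi : Continuous Phi :=
  continuous_iff_continuousAt.2 fun x => (hasDerivAt_Phi x).continuousAt

lemma integral_Iic_mul_phi (k : ℝ) : ∫ s in Iic k, s * phi s = -phi k := by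
  have := integral_Iic_of_hasDerivAt_of_tendsto' (f := fun s => -phi s)
    (f' := fun s => s * phi s) (a := k) (m := 0)
    (fun s _ => by exact (hasDerivAt_phi s).neg.congr_deriv (by ring))
    integrable_mul_phi.integrableOn
    (by simpa using tendsto_phi_atBot.neg)
  simpa using this

lemma Phi_le_mills {k : ℝ} (hk : k < 0) : Phi k ≤ -phi k / k := by
  have hmono : ∫ s in Iic k, phi s ≤ ∫ s in Iic k, (s / k) * phi s := by
    refine setIntegral_mono_on integrable_phi.integrableOn
      (((integrable_mul_phi.div_const k).congr (Eventually.of_forall fun s => by ring)).integrableOn)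
      measurableSet_Iic fun s hs => ?_
    have h1 : (1 : ℝ) ≤ s / k := by
      rw [le_div_iff_of_neg hk]; simpa using hs
    nlinarith [phi_pos s]
  have h2 : ∫ s in Iic k, (s / k) * phi s = -phi k / k := by
    rw [show (fun s => (s / k) * phi s) = fun s => (s * phi s) / k by funext s; ring,
      integral_div, integral_Iic_mul_phi]
  rw [Phi]; rw [h2] at hmono; exact hmono

lemma tendsto_Phi_atBot : Tendsto Phi atBot (nhds 0) := by
  have hub : ∀ᶠ k in atBot, Phi k ≤ phi k := by
    filter_upwards [eventually_le_atBot (-1 : ℝ)] with k hk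
    have hk0 : k < 0 := lt_of_le_of_lt hk (by norm_num)
    refine (Phi_le_mills hk0).trans ?_
    rw [div_le_iff_of_neg hk0]
    nlinarith [phi_pos k]
  have hlb : ∀ᶠ k in atBot, 0 ≤ Phi k := Eventually.of_forall Phi_nonneg
  exact tendsto_of_tendsto_of_tendsto_of_le_of_le' tendsto_const_nhds tendsto_phi_atBot hlb hub

lemma Phi_pos (x : ℝ) : 0 < Phi x := by
  rw [Phi, setIntegral_pos_iff_support_of_nonneg_ae
    (Eventually.of_forall fun s => (phi_pos s).le) integrable_phi.integrableOn]
  have : (Function.support phi) = univ := by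
    ext s; simp [Function.support, (phi_pos s).ne']
  rw [this, univ_inter]
  simp [Real.volume_Iic]

lemma gk_pos (k : ℝ) : 0 < phi k + k * Phi k := by
  have hnonneg : ∀ u : ℝ, 0 ≤ phi u + u * Phi u := by
    intro u
    rcases le_or_gt 0 u with h | h
    · have := Phi_nonneg u; have := phi_pos u; nlinarith
    · have hm := Phi_le_mills h
      rw [le_div_iff_of_neg h] at hm
      nlinarith
  have hd : ∀ u : ℝ, HasDerivAt (fun v => phi v + v * Phi v) (Phi u) u := by
    intro u
    have := (hasDerivAt_phi u).add (((hasDerivAt_id u).mul (hasDerivAt_Phi u)))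
    refine this.congr_deriv ?_
    simp
  have hmono : StrictMono (fun v => phi v + v * Phi v) := by
    apply strictMono_of_deriv_pos
    intro u
    rw [(hd u).deriv]
    exact Phi_pos u
  calc (0:ℝ) ≤ phi (k-1) + (k-1) * Phi (k-1) := hnonneg _
    _ < phi k + k * Phi k := hmono (by linarith)

noncomputable def bb (α : ℝ) : ℝ := Real.sqrt (1 + α ^ 2)
noncomputable def XX (t p α : ℝ) : ℝ := (p - α * t) / Real.sqrt (1 + α ^ 2)
noncomputable def KK (t p α : ℝ) : ℝ := (t + α * p) / Real.sqrt (1 + α ^ 2)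
noncomputable def YY (t p α : ℝ) : ℝ := ∫ s in Iic t, Phi (α * (s - t) + p) * phi s
noncomputable def BB (t p α : ℝ) : ℝ :=
  -(phi (XX t p α) * (phi (KK t p α) + KK t p α * Phi (KK t p α)) / (1 + α ^ 2))
noncomputable def FF (t p α : ℝ) : ℝ := phi (XX t p α) * Phi (KK t p α)

lemma bb_pos (α : ℝ) : 0 < bb α := Real.sqrt_pos.2 (by positivity)

lemma bb_sq (α : ℝ) : bb α ^ 2 = 1 + α ^ 2 := Real.sq_sqrt (by positivity)

lemma bb_mul_t_add (t p α : ℝ) : bb α * t + α * (p - α * t) / bb α = KK t p α := by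
  have h0 := (bb_pos α).ne'
  have h2 := bb_sq α
  rw [KK, show Real.sqrt (1 + α^2) = bb α from rfl]
  field_simp
  linear_combination t * h2

lemma phi_mul_phi (t p α s : ℝ) :
    phi (α * (s - t) + p) * phi s =
      phi (XX t p α) * phi (bb α * s + α * (p - α * t) / bb α) := by
  have h0 := (bb_pos α).ne'
  have h2 := bb_sq α
  simp only [phi, XX, div_mul_div_comm, ← Real.exp_add]
  rw [show Real.sqrt (1 + α^2) = bb α from rfl]
  have key2 : (α * (s - t) + p) ^ 2 + s ^ 2 =
      ((p - α * t) / bb α) ^ 2 + (bb α * s + α * (p - α * t) / bb α) ^ 2 := by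
    field_simp
    linear_combination ((α*(s-t)+p)^2 + s^2 - 2*(1+α^2)*s^2 - 2*α*(p-α*t)*s - (bb α^2 - (1+α^2))*s^2) * h2
  have key : -(α * (s - t) + p) ^ 2 / 2 + -s ^ 2 / 2 =
      -((p - α * t) / bb α) ^ 2 / 2 + -(bb α * s + α * (p - α * t) / bb α) ^ 2 / 2 := by
    linarith
  rw [key]

lemma integrable_bound (t : ℝ) : Integrable (fun s => (|s| + |t|) * phi s) := by
  have h1 : Integrable (fun s => |s| * phi s) := by
    refine integrable_mul_phi.abs.congr (Eventually.of_forall fun s => ?_)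
    simp [abs_mul, abs_of_pos (phi_pos s)]
  have h2 : Integrable (fun s => |t| * phi s) := integrable_phi.const_mul _
  refine (h1.add h2).congr (Eventually.of_forall fun s => by simp only [Pi.add_apply]; ring)

lemma norm_integrand_le (t p α : ℝ) (s : ℝ) :
    ‖(s - t) * phi (α * (s - t) + p) * phi s‖ ≤ (|s| + |t|) * phi s := by
  rw [norm_mul, norm_mul, Real.norm_eq_abs, Real.norm_eq_abs, Real.norm_eq_abs,
    abs_of_pos (phi_pos _), abs_of_pos (phi_pos _)]
  have h1 : |s - t| ≤ |s| + |t| := abs_sub s t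
  have h2 : phi (α * (s - t) + p) ≤ 1 := phi_le_one _
  calc |s - t| * phi (α * (s - t) + p) * phi s
      ≤ (|s| + |t|) * phi (α * (s - t) + p) * phi s := by
        have := (phi_pos (α * (s - t) + p)).le
        have := (phi_pos s).le
        exact mul_le_mul_of_nonneg_right (mul_le_mul_of_nonneg_right h1 ‹0 ≤ phi (α * (s - t) + p)›) ‹0 ≤ phi s›
    _ ≤ (|s| + |t|) * 1 * phi s := by
        have hst : (0:ℝ) ≤ |s| + |t| := by positivity
        exact mul_le_mul_of_nonneg_right (mul_le_mul_of_nonneg_left h2 hst) (phi_pos s).le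
    _ = (|s| + |t|) * phi s := by ring

lemma integrableOn_integrand (t p α : ℝ) :
    IntegrableOn (fun s => (s - t) * phi (α * (s - t) + p) * phi s) (Iic t) := by
  refine Integrable.mono' (integrable_bound t).integrableOn ?_
    (Eventually.of_forall fun s => norm_integrand_le t p α s)
  exact (((continuous_id.sub continuous_const).mul
    (continuous_phi.comp (by continuity))).mul continuous_phi).aestronglyMeasurable.restrict

lemma integral_integrand (t p α : ℝ) :
    ∫ s in Iic t, (s - t) * phi (α * (s - t) + p) * phi s = BB t p α := by
  set b := bb α with hbdef
  have hb0 := (bb_pos α).ne'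
  have hb2 := bb_sq α
  set d := α * (p - α * t) / b with hddef
  set K := KK t p α with hKdef
  have hKbd : b * t + d = K := bb_mul_t_add t p α
  set X := XX t p α with hXdef
  -- antiderivative
  set H : ℝ → ℝ := fun s => phi X * (-((phi (b * s + d) + K * Phi (b * s + d)) / (1 + α ^ 2))) with hHdef
  have hderiv : ∀ s : ℝ, HasDerivAt H ((s - t) * phi (α * (s - t) + p) * phi s) s := by
    intro s
    have hlin : HasDerivAt (fun s : ℝ => b * s + d) b s := by
      simpa using ((hasDerivAt_id s).const_mul b).add_const d
    have h1 : HasDerivAt (fun s => phi (b * s + d)) (-(b * s + d) * phi (b * s + d) * b) s := by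
      have := (hasDerivAt_phi (b * s + d)).comp s hlin; exact this
    have h2 : HasDerivAt (fun s => Phi (b * s + d)) (phi (b * s + d) * b) s := by
      have := (hasDerivAt_Phi (b * s + d)).comp s hlin; exact this
    have h3 := (((h1.add (h2.const_mul K)).div_const (1 + α ^ 2)).neg).const_mul (phi X)
    refine h3.congr_deriv ?_
    have hphi : phi (α * (s - t) + p) * phi s = phi X * phi (b * s + d) := phi_mul_phi t p α s
    have hK : K = b * t + d := hKbd.symm
    field_simp
    rw [show (1 + α ^ 2) * (s - t) * phi (α * (s - t) + p) * phi s
        = (s - t) * (phi (α * (s - t) + p) * phi s) * (1 + α ^ 2) by ring, hphi, hK]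
    linear_combination (phi X * phi (b * s + d) * (s - t)) * hb2
  have htend : Tendsto H atBot (nhds 0) := by
    have haff : Tendsto (fun s : ℝ => b * s + d) atBot atBot := by
      apply Filter.tendsto_atBot_add_const_right
      exact (tendsto_const_mul_atBot_of_pos (bb_pos α)).2 tendsto_id
    have h1 : Tendsto (fun s => phi (b * s + d)) atBot (nhds 0) := tendsto_phi_atBot.comp haff
    have h2 : Tendsto (fun s => Phi (b * s + d)) atBot (nhds 0) := tendsto_Phi_atBot.comp haff
    have h5 : Tendsto (fun s => phi X * -((phi (b * s + d) + K * Phi (b * s + d)) / (1 + α ^ 2)))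
        atBot (nhds (phi X * -((0 + K * 0) / (1 + α ^ 2)))) :=
      (((h1.add (h2.const_mul K)).div_const (1 + α ^ 2)).neg).const_mul (phi X)
    rw [hHdef]
    simpa using h5
  have := integral_Iic_of_hasDerivAt_of_tendsto' (f := H)
    (fun s _ => hderiv s) (integrableOn_integrand t p α) htend
  rw [this, sub_zero, hHdef]
  simp only []
  rw [hKbd, BB]
  ring

lemma BB_neg (t p α : ℝ) : BB t p α < 0 := by
  rw [BB, neg_lt_zero]
  have h1 := phi_pos (XX t p α)
  have h2 := gk_pos (KK t p α)
  positivity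

lemma hasDerivAt_YY (t p α₀ : ℝ) : HasDerivAt (YY t p) (BB t p α₀) α₀ := by
  have key := hasDerivAt_integral_of_dominated_loc_of_deriv_le (μ := volume.restrict (Iic t))
    (F := fun α s => Phi (α * (s - t) + p) * phi s)
    (F' := fun α s => (s - t) * phi (α * (s - t) + p) * phi s)
    (x₀ := α₀) (s := Metric.ball α₀ 1) (bound := fun s => (|s| + |t|) * phi s) (Metric.ball_mem_nhds α₀ one_pos)
    (Eventually.of_forall fun α => ((continuous_Phi.comp (by continuity)).mul
      continuous_phi).aestronglyMeasurable.restrict)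
    ?_ (((continuous_id.sub continuous_const).mul (continuous_phi.comp (by continuity))).mul
      continuous_phi).aestronglyMeasurable.restrict
    (Eventually.of_forall fun s => fun α _ => norm_integrand_le t p α s)
    (integrable_bound t).integrableOn
    (Eventually.of_forall fun s => fun α _ => ?_)
  · rw [show BB t p α₀ = ∫ s in Iic t, (s - t) * phi (α₀ * (s - t) + p) * phi s from
      (integral_integrand t p α₀).symm]
    exact key.2
  · -- integrability of F α₀
    refine Integrable.mono' integrable_phi.integrableOn ((continuous_Phi.comp
      (by continuity)).mul continuous_phi).aestronglyMeasurable.restrict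
      (Eventually.of_forall fun s => ?_)
    rw [Real.norm_eq_abs, abs_mul, abs_of_nonneg (Phi_nonneg _), abs_of_pos (phi_pos _)]
    have := Phi_le_one (α₀ * (s - t) + p)
    have := Phi_nonneg (α₀ * (s - t) + p)
    nlinarith [phi_pos s]
  · -- differentiability in α
    have hlin : HasDerivAt (fun α : ℝ => α * (s - t) + p) (s - t) α := by
      simpa using (hasDerivAt_mul_const (s - t)).add_const p
    have := ((hasDerivAt_Phi (α * (s - t) + p)).comp α hlin).mul_const (phi s)
    exact this.congr_deriv (by ring)

lemma hasDerivAt_XX (t p α : ℝ) :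
    HasDerivAt (XX t p) (-(KK t p α) / (1 + α ^ 2)) α := by
  have hb0 := (bb_pos α).ne'
  have hb2 := bb_sq α
  have hbd : HasDerivAt bb (1 / (2 * Real.sqrt (1 + α ^ 2)) * (2 * α)) α := by
    have hin : HasDerivAt (fun α : ℝ => 1 + α ^ 2) (2 * α) α := by
      simpa using (hasDerivAt_pow 2 α).const_add 1
    exact (Real.hasDerivAt_sqrt (by positivity)).comp α hin
  have hnum : HasDerivAt (fun α : ℝ => p - α * t) (-t) α := by
    simpa using ((hasDerivAt_mul_const t).const_sub p)
  have hdiv := hnum.div (x := α) hbd (bb_pos α).ne'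
  have heq : ∀ β, XX t p β = (p - β * t) / bb β := fun β => rfl
  refine (hdiv.congr_of_eventuallyEq (Eventually.of_forall fun β => (heq β))).congr_deriv ?_
  rw [KK, show Real.sqrt (1 + α ^ 2) = bb α from rfl]
  field_simp
  linear_combination (-(α * (t * α - p))) * hb2
lemma hasDerivAt_KK (t p α : ℝ) :
    HasDerivAt (KK t p) (XX t p α / (1 + α ^ 2)) α := by
  have hb0 := (bb_pos α).ne'
  have hb2 := bb_sq α
  have hbd : HasDerivAt bb (1 / (2 * Real.sqrt (1 + α ^ 2)) * (2 * α)) α := by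
    have hin : HasDerivAt (fun α : ℝ => 1 + α ^ 2) (2 * α) α := by
      simpa using (hasDerivAt_pow 2 α).const_add 1
    exact (Real.hasDerivAt_sqrt (by positivity)).comp α hin
  have hnum : HasDerivAt (fun α : ℝ => t + α * p) p α := by
    simpa using ((hasDerivAt_mul_const p).const_add t)
  have hdiv := hnum.div (x := α) hbd (bb_pos α).ne'
  have heq : ∀ β, KK t p β = (t + β * p) / bb β := fun β => rfl
  refine (hdiv.congr_of_eventuallyEq (Eventually.of_forall fun β => (heq β))).congr_deriv ?_
  rw [XX, show Real.sqrt (1 + α ^ 2) = bb α from rfl]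
  field_simp
  linear_combination (α * (p * α + t)) * hb2

lemma hasDerivAt_FF (t p α : ℝ) :
    HasDerivAt (FF t p) (-(XX t p α) * BB t p α) α := by
  have h1 : HasDerivAt (fun β => phi (XX t p β))
      (-(XX t p α) * phi (XX t p α) * (-(KK t p α) / (1 + α ^ 2))) α :=
    (hasDerivAt_phi (XX t p α)).comp α (hasDerivAt_XX t p α)
  have h2 : HasDerivAt (fun β => Phi (KK t p β))
      (phi (KK t p α) * (XX t p α / (1 + α ^ 2))) α :=
    (hasDerivAt_Phi (KK t p α)).comp α (hasDerivAt_KK t p α)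
  refine (h1.mul h2).congr_deriv ?_
  rw [BB]
  have : (1 : ℝ) + α ^ 2 ≠ 0 := by positivity
  field_simp
  ring

lemma strictAnti_YY (t p : ℝ) : StrictAnti (YY t p) :=
  strictAnti_of_deriv_neg fun α => by
    rw [(hasDerivAt_YY t p α).deriv]; exact BB_neg t p α

noncomputable def GaussI (x : ℝ) : ℝ :=
  if 0 < x ∧ x < 1 then phi (Function.invFun Phi x) else 0

noncomputable def M (a : ℝ → ℝ → ℝ → ℝ) (t p y : ℝ) : ℝ :=
  phi ((p - a t p y * t) / Real.sqrt (1 + (a t p y) ^ 2)) *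
    Phi ((t + a t p y * p) / Real.sqrt (1 + (a t p y) ^ 2))

theorem stmt_11 (a : ℝ → ℝ → ℝ → ℝ)
    (ha : ∀ t p y : ℝ, 0 < y → y < Phi t →
      ∫ s in Set.Iic t, Phi (a t p y * (s - t) + p) * phi s = y)
    (t p y : ℝ) (hy0 : 0 < y) (hy1 : y < Phi t) (My : ℝ)
    (hMy : HasDerivAt (fun y' => M a t p y') My y) :
    My = -(p - a t p y * t) / Real.sqrt (1 + (a t p y) ^ 2) := by
  set α₀ := a t p y with hα₀
  set A : ℝ → ℝ := fun y' => a t p y' with hAdef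
  have hYA : ∀ y' ∈ Ioo (0:ℝ) (Phi t), YY t p (A y') = y' := fun y' hy' =>
    ha t p y' hy'.1 hy'.2
  have hYy : YY t p α₀ = y := hYA y ⟨hy0, hy1⟩
  have hanti := strictAnti_YY t p
  have hcont : ContinuousAt A y := by
    rw [Metric.continuousAt_iff]
    intro ε hε
    have h1 : YY t p (α₀ + ε) < y := by rw [← hYy]; exact hanti (by linarith)
    have h2 : y < YY t p (α₀ - ε) := by rw [← hYy]; exact hanti (by linarith)
    refine ⟨min (min (y - YY t p (α₀ + ε)) (YY t p (α₀ - ε) - y)) (min y (Phi t - y)),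
      lt_min (lt_min (by linarith) (by linarith)) (lt_min hy0 (by linarith)), ?_⟩
    intro y' hy'
    rw [Real.dist_eq] at hy' ⊢
    have habs := abs_lt.1 hy'
    set δ := min (min (y - YY t p (α₀ + ε)) (YY t p (α₀ - ε) - y)) (min y (Phi t - y)) with hδ
    have d1 : δ ≤ y - YY t p (α₀ + ε) := le_trans (min_le_left _ _) (min_le_left _ _)
    have d2 : δ ≤ YY t p (α₀ - ε) - y := le_trans (min_le_left _ _) (min_le_right _ _)
    have d3 : δ ≤ y := le_trans (min_le_right _ _) (min_le_left _ _)
    have d4 : δ ≤ Phi t - y := le_trans (min_le_right _ _) (min_le_right _ _)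
    have hy'mem : y' ∈ Ioo (0:ℝ) (Phi t) := ⟨by linarith, by linarith⟩
    have e1 : A y' < α₀ + ε := by
      by_contra h
      push_neg at h
      have := hanti.antitone h
      rw [hYA y' hy'mem] at this
      linarith
    have e2 : α₀ - ε < A y' := by
      by_contra h
      push_neg at h
      have := hanti.antitone h
      rw [hYA y' hy'mem] at this
      linarith
    have hAy : A y = α₀ := rfl
    rw [hAy, abs_lt]
    constructor <;> linarith
  have hBne : BB t p α₀ ≠ 0 := (BB_neg t p α₀).ne
  have hdA : HasDerivAt A (BB t p α₀)⁻¹ y := by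
    refine HasDerivAt.of_local_left_inverse (f := YY t p) hcont (hasDerivAt_YY t p α₀) hBne ?_
    filter_upwards [Ioo_mem_nhds hy0 hy1] with y' hy' using hYA y' hy'
  have hdF : HasDerivAt (FF t p ∘ A) (-(XX t p α₀) * BB t p α₀ * (BB t p α₀)⁻¹) y :=
    (hasDerivAt_FF t p α₀).comp y hdA
  have hMF : (fun y' => M a t p y') = FF t p ∘ A := by
    funext y'; rfl
  have hfinal : HasDerivAt (fun y' => M a t p y') (-(XX t p α₀)) y := by
    rw [hMF]
    convert hdF using 1
    field_simp
  rw [hMy.unique hfinal, XX, neg_div]
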